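/- Fix a complex parameter ν and let a(t) be a twice-differentiable nowhere-zero function satisfying 4 a^3 a'' = (3a^4 + 2t a^2 - ν)(a^4 + 2t a^2 + ν). Fix a sign ε ∈ {+1, -1} and suppose y(t) is a twice-differentiable nowhere-zero function with y^2 = ν/(2a^2) - a^2/2 - t - ε a'/a. Then y satisfies the same equation with ν replaced by ν + ε, i.e. 4 y^3 y'' = (3y^4 + 2t y^2 - (ν+ε))(y^4 + 2t y^2 + (ν+ε)). -/

import Mathlib

private lemma step1 (A B C Y Z T n s : ℂ) (hs : s^2 = 1) (hA : A ≠ 0)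
    (e1 : 2*A^2*Y^2 = n - A^4 - 2*T*A^2 - 2*s*B*A)
    (hq : 4*A^3*C = (3*A^4 + 2*T*A^2 - n)*(A^4 + 2*T*A^2 + n))
    (d1 : 4*A*B*Y^2 + 4*A^2*Y*Z = -4*A^3*B - 2*A^2 - 4*T*A*B - 2*s*(C*A + B^2)) :
    2*Y*Z + s*n + s^2 - 2*s*A^2*Y^2 - s*Y^4 - 2*s*T*Y^2 = 0 := by
  have h4 : 4*A^4*(2*Y*Z + s*n + s^2 - 2*s*A^2*Y^2 - s*Y^4 - 2*s*T*Y^2) = 0 := by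
    linear_combination (2*A^2)*d1 - s*hq
      - (n*s^3 + (2:ℂ)*A*B*s^2 + (4:ℂ)*A^2*T*s + (-2:ℂ)*A^2*T*s^3 + (4:ℂ)*A^2*Y^2*s + (-2:ℂ)*A^2*Y^2*s^3 + (4:ℂ)*A^4*s + (-1:ℂ)*A^4*s^3)*e1
      - (n^2*s + (-2:ℂ)*A*B*n*s^2 + (-4:ℂ)*A^2*T*n*s + (-4:ℂ)*A^2*Y^2*n*s + (-4:ℂ)*A^2*B^2*s + (-8:ℂ)*A^3*B*T + (4:ℂ)*A^3*B*T*s^2 + (-8:ℂ)*A^3*B*Y^2 + (4:ℂ)*A^3*B*Y^2*s^2 + (-4:ℂ)*A^4 + (-2:ℂ)*A^4*n*s + (4:ℂ)*A^4*T^2*s + (8:ℂ)*A^4*Y^2*T*s + (4:ℂ)*A^4*Y^4*s + (-8:ℂ)*A^5*B + (2:ℂ)*A^5*B*s^2 + (4:ℂ)*A^6*T*s + (4:ℂ)*A^6*Y^2*s + A^8*s)*hs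
  have h5 : (4*A^4 : ℂ) ≠ 0 := by
    simp [pow_ne_zero, hA]
  exact (mul_eq_zero.mp h4).resolve_left h5

private lemma step2 (A B Y Z W T n s : ℂ) (hs : s^2 = 1) (hY : Y ≠ 0)
    (e1 : 2*A^2*Y^2 = n - A^4 - 2*T*A^2 - 2*s*B*A)
    (e2 : 2*Y*Z + s*n + s^2 - 2*s*A^2*Y^2 - s*Y^4 - 2*s*T*Y^2 = 0)
    (d2 : 2*Z*Z + 2*Y*W = 2*s*(2*A*B*Y^2 + 2*A^2*Y*Z) + 4*s*Y^3*Z + 2*s*(Y^2 + 2*T*Y*Z)) :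
    4*Y^3*W = (3*Y^4 + 2*T*Y^2 - (n + s))*(Y^4 + 2*T*Y^2 + (n + s)) := by
  have h6 : 2*Y^2*(4*Y^3*W - (3*Y^4 + 2*T*Y^2 - (n + s))*(Y^4 + 2*T*Y^2 + (n + s))) = 0 := by
    linear_combination (4*Y^4)*d2
      - ((-8:ℂ)*Y^6*s^2)*e1
      - ((-2:ℂ)*Y^2*s^4 + (-2:ℂ)*Y^2*n*s^5 + (8:ℂ)*Y^3*Z*s^2 + (-4:ℂ)*Y^3*Z*s^4 + (-8:ℂ)*Y^4*T*s^3 + (4:ℂ)*Y^4*T*s^5 + (-8:ℂ)*Y^6*s^3 + (2:ℂ)*Y^6*s^5 + (-4:ℂ)*A^2*Y^4*s^3)*e2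
      - ((2:ℂ)*Y^2*s^2 + (2:ℂ)*Y^2*s^4 + (4:ℂ)*Y^2*n*s + (4:ℂ)*Y^2*n*s^3 + (2:ℂ)*Y^2*n*s^5 + (2:ℂ)*Y^2*n^2 + (2:ℂ)*Y^2*n^2*s^2 + (2:ℂ)*Y^2*n^2*s^4 + (4:ℂ)*Y^3*Z*s^4 + (8:ℂ)*Y^3*Z*n*s^3 + (-4:ℂ)*Y^4*T*s^5 + (-8:ℂ)*Y^4*T*n*s^4 + (-8:ℂ)*Y^4*Z^2 + (8:ℂ)*Y^4*Z^2*s^2 + (16:ℂ)*Y^5*Z*T*s + (-16:ℂ)*Y^5*Z*T*s^3 + (4:ℂ)*Y^6*s + (4:ℂ)*Y^6*s^3 + (-2:ℂ)*Y^6*s^5 + (-4:ℂ)*Y^6*n + (4:ℂ)*Y^6*n*s^2 + (-4:ℂ)*Y^6*n*s^4 + (-8:ℂ)*Y^6*T^2 + (-8:ℂ)*Y^6*T^2*s^2 + (8:ℂ)*Y^6*T^2*s^4 + (16:ℂ)*Y^7*Z*s + (-8:ℂ)*Y^7*Z*s^3 + (-16:ℂ)*Y^8*T + (-16:ℂ)*Y^8*T*s^2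 + (8:ℂ)*Y^8*T*s^4 + (-6:ℂ)*Y^10 + (-6:ℂ)*Y^10*s^2 + (2:ℂ)*Y^10*s^4 + (16:ℂ)*A*B*Y^6*s + (-4:ℂ)*A^2*Y^4*n*s^4 + (16:ℂ)*A^2*Y^5*Z*s + (-8:ℂ)*A^2*Y^5*Z*s^3 + (-16:ℂ)*A^2*Y^6*T*s^2 + (8:ℂ)*A^2*Y^6*T*s^4 + (-16:ℂ)*A^2*Y^8*s^2 + (4:ℂ)*A^2*Y^8*s^4 + (-8:ℂ)*A^4*Y^6*s^2)*hs
  have h7 : (2*Y^2 : ℂ) ≠ 0 := by simp [pow_ne_zero, hY]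
  exact sub_eq_zero.mp ((mul_eq_zero.mp h6).resolve_left h7)

private lemma hd_sq {f : ℝ → ℂ} {f' : ℂ} {u : ℝ} (h : HasDerivAt f f' u) :
    HasDerivAt (fun x => f x ^ 2) (2 * f u * f') u := by
  have h2 : HasDerivAt (fun x => f x * f x) _ u := h.mul h
  have he : (fun x => f x * f x) = fun x => f x ^ 2 := by ext x; ring
  rw [he] at h2
  convert h2 using 1
  ring

private lemma hd_pow4 {f : ℝ → ℂ} {f' : ℂ} {u : ℝ} (h : HasDerivAt f f' u) :
    HasDerivAt (fun x => f x ^ 4) (4 * f u ^ 3 * f') u := by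
  have h2 : HasDerivAt (fun x => f x ^ 2 * f x ^ 2) _ u := (hd_sq h).mul (hd_sq h)
  have he : (fun x => f x ^ 2 * f x ^ 2) = fun x => f x ^ 4 := by ext x; ring
  rw [he] at h2
  convert h2 using 1
  ring

/-- Schlesinger/Bäcklund transformation (37): if `4 a³ a'' = (3a⁴+2ta²-ν)(a⁴+2ta²+ν)`
and `y² = ν/(2a²) - a²/2 - t - ε a'/a` with `ε = ±1`, then `y` satisfies the same
equation with `ν` replaced by `ν + ε`. -/
theorem schlesinger_transformation (ν : ℂ) (ε : ℝ) (hε : ε = 1 ∨ ε = -1)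
    (a y : ℝ → ℂ)
    (ha1 : Differentiable ℝ a) (ha2 : Differentiable ℝ (deriv a))
    (hane : ∀ t, a t ≠ 0)
    (hy1 : Differentiable ℝ y) (hy2 : Differentiable ℝ (deriv y))
    (hyne : ∀ t, y t ≠ 0)
    (heq : ∀ t : ℝ, 4 * (a t) ^ 3 * deriv (deriv a) t =
      (3 * (a t) ^ 4 + 2 * (t : ℂ) * (a t) ^ 2 - ν) *
        ((a t) ^ 4 + 2 * (t : ℂ) * (a t) ^ 2 + ν))
    (hy : ∀ t : ℝ, (y t) ^ 2 =
      ν / (2 * (a t) ^ 2) - (a t) ^ 2 / 2 - (t : ℂ) - (ε : ℂ) * deriv a t / a t) :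
    ∀ t : ℝ, 4 * (y t) ^ 3 * deriv (deriv y) t =
      (3 * (y t) ^ 4 + 2 * (t : ℂ) * (y t) ^ 2 - (ν + (ε : ℂ))) *
        ((y t) ^ 4 + 2 * (t : ℂ) * (y t) ^ 2 + (ν + (ε : ℂ))) := by
  set s : ℂ := (ε : ℂ) with hsdef
  have hs : s ^ 2 = 1 := by
    rcases hε with h | h <;> simp [hsdef, h]
  have hda : ∀ u : ℝ, HasDerivAt a (deriv a u) u := fun u => (ha1 u).hasDerivAt
  have hdb : ∀ u : ℝ, HasDerivAt (deriv a) (deriv (deriv a) u) u := fun u => (ha2 u).hasDerivAt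
  have hdy : ∀ u : ℝ, HasDerivAt y (deriv y u) u := fun u => (hy1 u).hasDerivAt
  have hdz : ∀ u : ℝ, HasDerivAt (deriv y) (deriv (deriv y) u) u := fun u => (hy2 u).hasDerivAt
  have hdt : ∀ u : ℝ, HasDerivAt (fun x : ℝ => (x : ℂ)) 1 u := fun u => by
    simpa using (hasDerivAt_id u).ofReal_comp
  have e1 : ∀ u : ℝ, 2*(a u)^2*(y u)^2
      = ν - (a u)^4 - 2*(u:ℂ)*(a u)^2 - 2*s*(deriv a u)*(a u) := by
    intro u
    have h := hy u
    field_simp [hane u] at h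
    have h2 : 2*(a u)*(2*(a u)^2*(y u)^2
        - (ν - (a u)^4 - 2*(u:ℂ)*(a u)^2 - 2*s*(deriv a u)*(a u))) = 0 := by
      linear_combination (2*(a u)) * h
    have h3 : (2*(a u) : ℂ) ≠ 0 := by simp [hane u]
    exact sub_eq_zero.mp ((mul_eq_zero.mp h2).resolve_left h3)
  have d1 : ∀ u : ℝ, 4*(a u)*(deriv a u)*(y u)^2 + 4*(a u)^2*(y u)*(deriv y u)
      = -4*(a u)^3*(deriv a u) - 2*(a u)^2 - 4*(u:ℂ)*(a u)*(deriv a u)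
        - 2*s*((deriv (deriv a) u)*(a u) + (deriv a u)^2) := by
    intro u
    have hL : HasDerivAt (fun x : ℝ => 2*(a x)^2*(y x)^2) _ u := ((hd_sq (hda u)).const_mul (2:ℂ)).mul (hd_sq (hdy u))
    have hR := (((hasDerivAt_const (𝕜 := ℝ) u ν).sub (hd_pow4 (hda u))).sub
        (((hdt u).const_mul (2:ℂ)).mul (hd_sq (hda u)))).sub
        (((hdb u).const_mul (2*s)).mul (hda u))
    have hfe : (fun x : ℝ => 2*(a x)^2*(y x)^2)
        = (fun x : ℝ => ν - (a x)^4 - 2*(x:ℂ)*(a x)^2 - 2*s*(deriv a x)*(a x)) :=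
      funext fun x => e1 x
    have hkey := (hfe ▸ hL).unique hR
    linear_combination hkey
  have e2 : ∀ u : ℝ, 2*(y u)*(deriv y u) + s*ν + s^2 - 2*s*(a u)^2*(y u)^2
      - s*(y u)^4 - 2*s*(u:ℂ)*(y u)^2 = 0 := fun u =>
    step1 (a u) (deriv a u) (deriv (deriv a) u) (y u) (deriv y u) (u:ℂ) ν s
      hs (hane u) (e1 u) (heq u) (d1 u)
  have e2' : ∀ u : ℝ, 2*(y u)*(deriv y u)
      = 2*s*(a u)^2*(y u)^2 + s*(y u)^4 + 2*s*(u:ℂ)*(y u)^2 - s*ν - s^2 := by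
    intro u
    linear_combination e2 u
  have d2 : ∀ u : ℝ, 2*(deriv y u)*(deriv y u) + 2*(y u)*(deriv (deriv y) u)
      = 2*s*(2*(a u)*(deriv a u)*(y u)^2 + 2*(a u)^2*(y u)*(deriv y u))
        + 4*s*(y u)^3*(deriv y u) + 2*s*((y u)^2 + 2*(u:ℂ)*(y u)*(deriv y u)) := by
    intro u
    have hL : HasDerivAt (fun x : ℝ => 2*(y x)*(deriv y x)) _ u := ((hdy u).const_mul (2:ℂ)).mul (hdz u)
    have hR := ((((((hd_sq (hda u)).const_mul (2*s)).mul (hd_sq (hdy u))).add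
        
        ((hd_pow4 (hdy u)).const_mul s)).add
        (((hdt u).const_mul (2*s)).mul (hd_sq (hdy u)))).sub
        (hasDerivAt_const (𝕜 := ℝ) u (s*ν))).sub (hasDerivAt_const (𝕜 := ℝ) u (s^2))
    have hfe : (fun x : ℝ => 2*(y x)*(deriv y x))
        = (fun x : ℝ => 2*s*(a x)^2*(y x)^2 + s*(y x)^4 + 2*s*(x:ℂ)*(y x)^2 - s*ν - s^2) :=
      funext fun x => e2' x
    have hkey := (hfe ▸ hL).unique hR
    linear_combination hkey
  intro t
  exact step2 (a t) (deriv a t) (y t) (deriv y t) (deriv (deriv y) t) (t:ℂ) ν s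
    hs (hyne t) (e1 t) (e2 t) (d2 t)
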